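/- Fix t₀ ∈ D. The following are equivalent: (i) for every v ∈ ℝⁿ, the family u_{α,v}(s) := N_αᵀ(s) χ(t₀, s)ᵀ v is a control for the system ∂x/∂t^α = M_α(t)x + N_α(t)u_α(t) (i.e., satisfies its complete integrability conditions); (ii) for all α, β: M_α N_β N_βᵀ + (∂N_α/∂s^β) N_αᵀ + N_α (∂N_αᵀ/∂s^β) + N_β N_βᵀ M_αᵀ = M_β N_α N_αᵀ + (∂N_β/∂s^α) N_βᵀ + N_β (∂N_βᵀ/∂s^α) + N_α N_αᵀ M_βᵀ on D. -/

import Mathlib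

open Matrix

attribute [local instance] Matrix.normedAddCommGroup Matrix.normedSpace

section MyAux

variable {a b c : ℕ}

lemma my_matrix_norm_mul_le (A : Matrix (Fin a) (Fin b) ℝ) (B : Matrix (Fin b) (Fin c) ℝ) :
    ‖A * B‖ ≤ (b : ℝ) * ‖A‖ * ‖B‖ := by
  rw [Matrix.norm_le_iff (by positivity)]
  intro i j
  rw [Matrix.mul_apply]
  calc ‖∑ k, A i k * B k j‖ ≤ ∑ k : Fin b, ‖A i k * B k j‖ := norm_sum_le _ _
    _ ≤ ∑ _k : Fin b, ‖A‖ * ‖B‖ := by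
        refine Finset.sum_le_sum fun k _ => ?_
        rw [norm_mul]
        exact mul_le_mul (A.norm_entry_le_entrywise_sup_norm)
          (B.norm_entry_le_entrywise_sup_norm) (norm_nonneg _) (norm_nonneg _)
    _ = (b : ℝ) * ‖A‖ * ‖B‖ := by simp [mul_assoc]

lemma my_matrix_norm_mulVec_le (A : Matrix (Fin a) (Fin b) ℝ) (x : Fin b → ℝ) :
    ‖A *ᵥ x‖ ≤ (b : ℝ) * ‖A‖ * ‖x‖ := by
  rw [pi_norm_le_iff_of_nonneg (by positivity)]
  intro i
  calc ‖∑ k, A i k * x k‖ ≤ ∑ k : Fin b, ‖A i k * x k‖ := norm_sum_le _ _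
    _ ≤ ∑ _k : Fin b, ‖A‖ * ‖x‖ := by
        refine Finset.sum_le_sum fun k _ => ?_
        rw [norm_mul]
        exact mul_le_mul (A.norm_entry_le_entrywise_sup_norm)
          (norm_le_pi_norm x k) (norm_nonneg _) (norm_nonneg _)
    _ = (b : ℝ) * ‖A‖ * ‖x‖ := by simp [mul_assoc]

lemma my_isBBM_mul : IsBoundedBilinearMap ℝ
    (fun p : Matrix (Fin a) (Fin b) ℝ × Matrix (Fin b) (Fin c) ℝ => p.1 * p.2) where
  add_left x₁ x₂ y := Matrix.add_mul x₁ x₂ y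
  smul_left c x y := Matrix.smul_mul c x y
  add_right x y₁ y₂ := Matrix.mul_add x y₁ y₂
  smul_right c x y := Matrix.mul_smul x c y
  bound := ⟨(b : ℝ) + 1, by positivity, fun x y => by
    refine (my_matrix_norm_mul_le x y).trans ?_
    nlinarith [norm_nonneg x, norm_nonneg y, mul_nonneg (norm_nonneg x) (norm_nonneg y)]⟩

lemma my_isBBM_mulVec : IsBoundedBilinearMap ℝ
    (fun p : Matrix (Fin a) (Fin b) ℝ × (Fin b → ℝ) => p.1 *ᵥ p.2) where
  add_left x₁ x₂ y := Matrix.add_mulVec x₁ x₂ y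
  smul_left c x y := by rw [Matrix.smul_mulVec]
  add_right x y₁ y₂ := Matrix.mulVec_add x y₁ y₂
  smul_right c x y := by rw [Matrix.mulVec_smul]
  bound := ⟨(b : ℝ) + 1, by positivity, fun x y => by
    refine (my_matrix_norm_mulVec_le x y).trans ?_
    nlinarith [norm_nonneg x, norm_nonneg y, mul_nonneg (norm_nonneg x) (norm_nonneg y)]⟩

variable {E : Type*} [NormedAddCommGroup E] [NormedSpace ℝ E]

lemma my_hasFDerivAt_matmul {f : E → Matrix (Fin a) (Fin b) ℝ} {g : E → Matrix (Fin b) (Fin c) ℝ}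
    {f' : E →L[ℝ] Matrix (Fin a) (Fin b) ℝ} {g' : E →L[ℝ] Matrix (Fin b) (Fin c) ℝ} {x : E}
    (hf : HasFDerivAt f f' x) (hg : HasFDerivAt g g' x) :
    ∃ L : E →L[ℝ] Matrix (Fin a) (Fin c) ℝ, HasFDerivAt (fun s => f s * g s) L x ∧
      ∀ w, L w = f' w * g x + f x * g' w := by
  have h2 := hf.prodMk hg
  have h1 := my_isBBM_mul.hasFDerivAt (f x, g x)
  have h3 := h1.comp x h2
  refine ⟨_, h3, fun w => ?_⟩
  exact add_comm _ _

lemma my_hasFDerivAt_matmulVec {f : E → Matrix (Fin a) (Fin b) ℝ} {g : E → (Fin b → ℝ)}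
    {f' : E →L[ℝ] Matrix (Fin a) (Fin b) ℝ} {g' : E →L[ℝ] (Fin b → ℝ)} {x : E}
    (hf : HasFDerivAt f f' x) (hg : HasFDerivAt g g' x) :
    ∃ L : E →L[ℝ] (Fin a → ℝ), HasFDerivAt (fun s => f s *ᵥ g s) L x ∧
      ∀ w, L w = f' w *ᵥ g x + f x *ᵥ g' w := by
  have h2 := hf.prodMk hg
  have h1 := my_isBBM_mulVec.hasFDerivAt (f x, g x)
  have h3 := h1.comp x h2
  refine ⟨_, h3, fun w => ?_⟩
  exact add_comm _ _

noncomputable def myTransCLM (a b : ℕ) : Matrix (Fin a) (Fin b) ℝ →L[ℝ] Matrix (Fin b) (Fin a) ℝ :=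
  LinearMap.toContinuousLinearMap (Matrix.transposeLinearEquiv (Fin a) (Fin b) ℝ ℝ).toLinearMap

@[simp] lemma myTransCLM_apply (A : Matrix (Fin a) (Fin b) ℝ) : myTransCLM a b A = Aᵀ := rfl

lemma my_hasFDerivAt_trans {f : E → Matrix (Fin a) (Fin b) ℝ}
    {f' : E →L[ℝ] Matrix (Fin a) (Fin b) ℝ} {x : E} (hf : HasFDerivAt f f' x) :
    HasFDerivAt (fun s => (f s)ᵀ) ((myTransCLM a b).comp f') x :=
  (myTransCLM a b).hasFDerivAt.comp x hf

lemma my_contDiff_entry {p q : ℕ} (i : Fin p) (j : Fin q) :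
    ContDiff ℝ 1 (fun A : Matrix (Fin p) (Fin q) ℝ => A i j) :=
  contDiff_pi.mp (contDiff_pi.mp contDiff_id i) j

lemma my_contDiff_det {p : ℕ} : ContDiff ℝ 1 (fun A : Matrix (Fin p) (Fin p) ℝ => A.det) := by
  have : (fun A : Matrix (Fin p) (Fin p) ℝ => A.det)
      = fun A => ∑ σ : Equiv.Perm (Fin p), (Equiv.Perm.sign σ : ℝ) * ∏ i, A (σ i) i := by
    funext A; rw [Matrix.det_apply']
  rw [this]
  apply ContDiff.sum
  intro σ _
  exact contDiff_const.mul (contDiff_prod fun i _ => my_contDiff_entry (σ i) i)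

lemma my_contDiff_updateRow {p : ℕ} (j : Fin p) (w : Fin p → ℝ) :
    ContDiff ℝ 1 (fun A : Matrix (Fin p) (Fin p) ℝ => A.updateRow j w) := by
  refine contDiff_pi.mpr ?_
  intro i
  rw [contDiff_pi]
  intro l
  by_cases h : i = j
  · subst h
    simp only [Matrix.updateRow_apply, if_pos rfl]
    exact contDiff_const
  · simp only [Matrix.updateRow_apply, if_neg h]
    exact my_contDiff_entry i l

lemma my_contDiff_adjugate {p : ℕ} :
    ContDiff ℝ 1 (fun A : Matrix (Fin p) (Fin p) ℝ => A.adjugate) := by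
  refine contDiff_pi.mpr ?_
  intro i
  rw [contDiff_pi]
  intro j
  have : (fun A : Matrix (Fin p) (Fin p) ℝ => A.adjugate i j)
      = fun A => (A.updateRow j (Pi.single i 1)).det := by
    funext A; rw [Matrix.adjugate_apply]
  rw [this]
  exact my_contDiff_det.comp (my_contDiff_updateRow j (Pi.single i 1))

lemma my_single_sum {m : ℕ} (v : Fin m → ℝ) :
    v = ∑ α, v α • (Pi.single α 1 : Fin m → ℝ) := by
  rw [← Finset.univ_sum_single v]
  congr 1; ext α i
  simp [Pi.single_apply]

lemma my_total_deriv_zero {m n : ℕ} {D : Set (Fin m → ℝ)} (hconv : Convex ℝ D)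
    {M : Fin m → (Fin m → ℝ) → Matrix (Fin n) (Fin n) ℝ}
    (hM : ∀ α, ContinuousOn (M α) D)
    {Y : (Fin m → ℝ) → Matrix (Fin n) (Fin n) ℝ}
    (hY : ∀ t ∈ D, ∃ L : (Fin m → ℝ) →L[ℝ] Matrix (Fin n) (Fin n) ℝ,
      HasFDerivAt Y L t ∧ ∀ α, L (Pi.single α 1) = M α t * Y t)
    {c : Fin m → ℝ} (hc : c ∈ D) (hYc : Y c = 0) : ∀ s ∈ D, Y s = 0 := by
  intro s hs
  set γ : ℝ → (Fin m → ℝ) := fun τ => c + τ • (s - c) with hγdef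
  have hγmem : ∀ τ ∈ Set.Icc (0:ℝ) 1, γ τ ∈ D := by
    intro τ hτ
    have := hconv hc hs (by linarith [hτ.2] : (0:ℝ) ≤ 1 - τ) hτ.1 (by ring)
    convert this using 1
    ext i; simp [hγdef]; ring
  have hγcont : Continuous γ := by continuity
  set A : ℝ → Matrix (Fin n) (Fin n) ℝ := fun τ => ∑ α, (s - c) α • M α (γ τ) with hAdef
  set y : ℝ → Matrix (Fin n) (Fin n) ℝ := fun τ => Y (γ τ) with hydef
  have hy : ∀ τ ∈ Set.Icc (0:ℝ) 1, HasDerivAt y (A τ * y τ) τ := by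
    intro τ hτ
    obtain ⟨L, hL, hLα⟩ := hY (γ τ) (hγmem τ hτ)
    have hγ' : HasDerivAt γ (s - c) τ := by
      simpa [hγdef] using ((hasDerivAt_id τ).smul_const (s - c)).const_add c
    have := hL.comp_hasDerivAt τ hγ'
    suffices hLsc : A τ * y τ = L (s - c) from this.congr_deriv hLsc.symm
    rw [show L (s - c) = L (∑ α, (s - c) α • (Pi.single α 1 : Fin m → ℝ)) by
      rw [← my_single_sum]]
    rw [map_sum, hAdef, Finset.sum_mul]
    congr 1; ext α
    rw [L.map_smul, hLα α, smul_mul_assoc]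
  have hAcont : ContinuousOn A (Set.Icc (0:ℝ) 1) := by
    apply continuousOn_finset_sum
    intro α _
    exact (((hM α).comp hγcont.continuousOn hγmem)).const_smul ((s - c) α)
  obtain ⟨K, hK⟩ := (isCompact_Icc (a := (0:ℝ)) (b := 1)).exists_bound_of_continuousOn hAcont
  set C : ℝ := (n : ℝ) * max K 0 with hCdef
  have hbound : ∀ τ ∈ Set.Ico (0:ℝ) 1, ‖A τ * y τ‖ ≤ C * ‖y τ‖ + 0 := by
    intro τ hτ
    have h1 := my_matrix_norm_mul_le (A τ) (y τ)
    have h2 : ‖A τ‖ ≤ max K 0 :=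
      le_trans (hK τ (Set.Ico_subset_Icc_self hτ)) (le_max_left _ _)
    have : (n:ℝ) * ‖A τ‖ * ‖y τ‖ ≤ C * ‖y τ‖ := by
      rw [hCdef]
      gcongr
    linarith
  have := norm_le_gronwallBound_of_norm_deriv_right_le
    (f := y) (f' := fun τ => A τ * y τ) (δ := 0) (K := C) (ε := 0) (a := 0) (b := 1)
    (fun τ hτ => (hy τ hτ).continuousAt.continuousWithinAt)
    (fun τ hτ => ((hy τ (Set.Ico_subset_Icc_self hτ)).hasDerivWithinAt))
    (by simp [hydef, hγdef, hYc]) hbound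
  have h1 := this 1 (by norm_num)
  rw [gronwallBound_ε0, zero_mul] at h1
  have : y 1 = 0 := norm_le_zero_iff.mp h1
  simpa [hydef, hγdef] using this

end MyAux


/-- `χ` is the fundamental matrix of the system `∂X/∂t^α = M_α(t) X` on `D`. -/
def IsFundamentalMatrix {m n : ℕ} (D : Set (Fin m → ℝ))
    (M : Fin m → (Fin m → ℝ) → Matrix (Fin n) (Fin n) ℝ)
    (χ : (Fin m → ℝ) → (Fin m → ℝ) → Matrix (Fin n) (Fin n) ℝ) : Prop :=
  ∀ t₀ ∈ D, χ t₀ t₀ = 1 ∧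
    ∀ t ∈ D, DifferentiableAt ℝ (fun s => χ s t₀) t ∧
      ∀ α, fderiv ℝ (fun s => χ s t₀) t (Pi.single α 1) = M α t * χ t t₀

/-- `(u_α)` is a control for the system `∂x/∂t^α = M_α(t)x + N_α(t)u_α(t)`:
it is `C¹` and satisfies the complete integrability conditions of the controlled system. -/
def IsControl {m n k : ℕ} (D : Set (Fin m → ℝ))
    (M : Fin m → (Fin m → ℝ) → Matrix (Fin n) (Fin n) ℝ)
    (N : Fin m → (Fin m → ℝ) → Matrix (Fin n) (Fin k) ℝ)
    (u : Fin m → (Fin m → ℝ) → (Fin k → ℝ)) : Prop :=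
  (∀ α, ContDiffOn ℝ 1 (u α) D) ∧
  ∀ t ∈ D, ∀ α β,
    M α t *ᵥ (N β t *ᵥ u β t) + (fderiv ℝ (N α) t (Pi.single β 1)) *ᵥ u α t
      + N α t *ᵥ (fderiv ℝ (u α) t (Pi.single β 1)) =
    M β t *ᵥ (N α t *ᵥ u α t) + (fderiv ℝ (N β) t (Pi.single α 1)) *ᵥ u β t
      + N β t *ᵥ (fderiv ℝ (u β) t (Pi.single α 1))

/-- For fixed `t₀ ∈ D`, the families `u_{α,v}(s) = N_αᵀ(s) χ(t₀,s)ᵀ v` are controls for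
every `v ∈ ℝⁿ` if and only if the gramian conditions (14) hold on `D`. -/
theorem gramian_controls_iff {m n k : ℕ} (D : Set (Fin m → ℝ))
    (hD : IsOpen D) (hconv : Convex ℝ D)
    (M : Fin m → (Fin m → ℝ) → Matrix (Fin n) (Fin n) ℝ)
    (hM : ∀ α, ContDiffOn ℝ 1 (M α) D)
    (hMI : ∀ t ∈ D, ∀ α β,
      fderiv ℝ (M α) t (Pi.single β 1) + M α t * M β t =
      fderiv ℝ (M β) t (Pi.single α 1) + M β t * M α t)
    (N : Fin m → (Fin m → ℝ) → Matrix (Fin n) (Fin k) ℝ)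
    (hN : ∀ α, ContDiffOn ℝ 1 (N α) D)
    (χ : (Fin m → ℝ) → (Fin m → ℝ) → Matrix (Fin n) (Fin n) ℝ)
    (hχ : IsFundamentalMatrix D M χ)
    (t₀ : Fin m → ℝ) (ht₀ : t₀ ∈ D) :
    (∀ v : Fin n → ℝ,
      IsControl D M N (fun α s => (N α s)ᵀ *ᵥ ((χ t₀ s)ᵀ *ᵥ v)))
    ↔
    (∀ s ∈ D, ∀ α β,
      M α s * (N β s * (N β s)ᵀ) + fderiv ℝ (N α) s (Pi.single β 1) * (N α s)ᵀ
        + N α s * (fderiv ℝ (N α) s (Pi.single β 1))ᵀ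
        + N β s * (N β s)ᵀ * (M α s)ᵀ =
      M β s * (N α s * (N α s)ᵀ) + fderiv ℝ (N β) s (Pi.single α 1) * (N β s)ᵀ
        + N β s * (fderiv ℝ (N β) s (Pi.single α 1))ᵀ
        + N α s * (N α s)ᵀ * (M β s)ᵀ) := by
  classical
  -- continuity of the coefficients
  have hMc : ∀ α, ContinuousOn (M α) D := fun α => (hM α).continuousOn
  -- derivative data for `fun r => χ r c`
  have hder : ∀ c ∈ D, ∀ t ∈ D,
      HasFDerivAt (fun r => χ r c) (fderiv ℝ (fun r => χ r c) t) t ∧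
      ∀ α, fderiv ℝ (fun r => χ r c) t (Pi.single α 1) = M α t * χ t c := by
    intro c hc t ht
    exact ⟨((hχ c hc).2 t ht).1.hasFDerivAt, ((hχ c hc).2 t ht).2⟩
  -- the cocycle identity
  have hcocycle : ∀ b ∈ D, ∀ c ∈ D, ∀ a ∈ D, χ a c = χ a b * χ b c := by
    intro b hb c hc a ha
    have hz := my_total_deriv_zero (M := M) hconv hMc
      (Y := fun r => χ r b * χ b c - χ r c) ?_ hb ?_ a ha
    · exact (sub_eq_zero.mp hz).symm
    · intro t ht
      obtain ⟨L1, hL1, hL1app⟩ := my_hasFDerivAt_matmul ((hder b hb t ht).1)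
        (hasFDerivAt_const (χ b c) t)
      refine ⟨L1 - fderiv ℝ (fun r => χ r c) t, hL1.sub (hder c hc t ht).1, fun α => ?_⟩
      simp only [ContinuousLinearMap.coe_sub', Pi.sub_apply, hL1app,
        (hder b hb t ht).2 α, (hder c hc t ht).2 α, ContinuousLinearMap.zero_apply,
        Matrix.mul_zero, add_zero]
      rw [Matrix.mul_sub, Matrix.mul_assoc]
    · simp [(hχ b hb).1]
  -- two-sided inverse relations
  have hRinv : ∀ s ∈ D, χ s t₀ * χ t₀ s = 1 := by
    intro s hs
    rw [← hcocycle t₀ ht₀ s hs s hs, (hχ s hs).1]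
  have hLinv : ∀ s ∈ D, χ t₀ s * χ s t₀ = 1 := by
    intro s hs
    rw [← hcocycle s hs t₀ ht₀ t₀ ht₀, (hχ t₀ ht₀).1]
  -- continuity of `fun s => χ s t₀`
  have hψcont : ContinuousOn (fun s => χ s t₀) D :=
    fun t ht => ((hχ t₀ ht₀).2 t ht).1.continuousAt.continuousWithinAt
  -- `ψ := fun s => χ s t₀` is C¹ on D
  have hψfder : ∀ t ∈ D, fderiv ℝ (fun s => χ s t₀) t
      = ∑ α, (ContinuousLinearMap.proj (R := ℝ) (φ := fun _ : Fin m => ℝ) α).smulRight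
          (M α t * χ t t₀) := by
    intro t ht
    ext1 v
    conv_lhs => rw [show v = ∑ α, v α • (Pi.single α 1 : Fin m → ℝ) from my_single_sum v,
      map_sum]
    rw [ContinuousLinearMap.sum_apply]
    refine Finset.sum_congr rfl fun α _ => ?_
    rw [ContinuousLinearMap.map_smul, (hder t₀ ht₀ t ht).2 α]
    simp
  have hψC1 : ContDiffOn ℝ 1 (fun s => χ s t₀) D := by
    rw [show (1 : WithTop ℕ∞) = 0 + 1 by norm_num,
      contDiffOn_succ_iff_fderiv_of_isOpen hD]
    refine ⟨fun t ht => ((hχ t₀ ht₀).2 t ht).1.differentiableWithinAt, by simp, ?_⟩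
    rw [contDiffOn_zero]
    apply ContinuousOn.congr (f := fun t => ∑ α,
      (ContinuousLinearMap.proj (R := ℝ) (φ := fun _ : Fin m => ℝ) α).smulRight
        (M α t * χ t t₀)) _ hψfder
    apply continuousOn_finset_sum
    intro α _
    have hmul : ContinuousOn (fun t => M α t * χ t t₀) D :=
      my_isBBM_mul.continuous.comp_continuousOn ((hMc α).prodMk hψcont)
    exact ((ContinuousLinearMap.smulRightL ℝ (Fin m → ℝ)
      (Matrix (Fin n) (Fin n) ℝ) _).continuous.comp_continuousOn hmul)
  -- `φ := fun s => χ t₀ s` is C¹ on D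
  have hdet : ∀ s ∈ D, (χ s t₀).det ≠ 0 :=
    fun s hs => Matrix.det_ne_zero_of_right_inverse (hRinv s hs)
  have hφeq : ∀ s ∈ D, χ t₀ s = ((χ s t₀).det)⁻¹ • (χ s t₀).adjugate := by
    intro s hs
    rw [← Matrix.inv_eq_right_inv (hRinv s hs), Matrix.inv_def, Ring.inverse_eq_inv]
  have hφC1 : ContDiffOn ℝ 1 (fun s => χ t₀ s) D := by
    refine ContDiffOn.congr ?_ hφeq
    exact ((my_contDiff_det.comp_contDiffOn hψC1).inv hdet).smul
      (my_contDiff_adjugate.comp_contDiffOn hψC1)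
  -- derivative of φ
  have hφderiv : ∀ t ∈ D, HasFDerivAt (fun s => χ t₀ s) (fderiv ℝ (fun s => χ t₀ s) t) t ∧
      ∀ β, fderiv ℝ (fun s => χ t₀ s) t (Pi.single β 1) = -(χ t₀ t * M β t) := by
    intro t ht
    have hφd : HasFDerivAt (fun s => χ t₀ s) (fderiv ℝ (fun s => χ t₀ s) t) t :=
      (((hφC1.differentiableOn one_ne_zero) t ht).differentiableAt (hD.mem_nhds ht)).hasFDerivAt
    refine ⟨hφd, fun β => ?_⟩
    obtain ⟨L, hL, happ⟩ := my_hasFDerivAt_matmul hφd (hder t₀ ht₀ t ht).1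
    have heq : (fun _ : Fin m → ℝ => (1 : Matrix (Fin n) (Fin n) ℝ))
        =ᶠ[nhds t] (fun s => χ t₀ s * χ s t₀) :=
      Filter.eventuallyEq_of_mem (hD.mem_nhds ht) (fun s hs => (hLinv s hs).symm)
    have hL0 : L = 0 := (hL.congr_of_eventuallyEq heq).unique (hasFDerivAt_const 1 t)
    have h0 : (0 : Matrix (Fin n) (Fin n) ℝ)
        = fderiv ℝ (fun s => χ t₀ s) t (Pi.single β 1) * χ t t₀
          + χ t₀ t * (M β t * χ t t₀) := by
      have h2 := happ (Pi.single β 1)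
      rw [hL0, (hder t₀ ht₀ t ht).2 β] at h2
      simpa using h2
    have h1 := congrArg (fun Z => Z * χ t₀ t) h0
    simp only [zero_mul, add_mul, Matrix.mul_assoc] at h1
    rw [hRinv t ht] at h1
    simp only [Matrix.mul_one] at h1
    exact eq_neg_of_add_eq_zero_left h1.symm
  -- derivatives of N
  have hNd : ∀ α, ∀ t ∈ D, HasFDerivAt (N α) (fderiv ℝ (N α) t) t := fun α t ht =>
    ((((hN α).differentiableOn one_ne_zero) t ht).differentiableAt (hD.mem_nhds ht)).hasFDerivAt
  -- smoothness of the candidate controls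
  have husm : ∀ (v : Fin n → ℝ) α,
      ContDiffOn ℝ 1 (fun s => (N α s)ᵀ *ᵥ ((χ t₀ s)ᵀ *ᵥ v)) D := by
    intro v α
    have hNT : ContDiffOn ℝ 1 (fun s => (N α s)ᵀ) D :=
      (myTransCLM n k).contDiff.comp_contDiffOn (hN α)
    have hφT : ContDiffOn ℝ 1 (fun s => (χ t₀ s)ᵀ) D :=
      (myTransCLM n n).contDiff.comp_contDiffOn hφC1
    have hin : ContDiffOn ℝ 1 (fun s => (χ t₀ s)ᵀ *ᵥ v) D :=
      my_isBBM_mulVec.contDiff.comp_contDiffOn (hφT.prodMk contDiffOn_const)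
    exact my_isBBM_mulVec.contDiff.comp_contDiffOn (hNT.prodMk hin)
  -- derivative of the candidate controls
  have hufder : ∀ (v : Fin n → ℝ) α, ∀ t ∈ D, ∀ β,
      fderiv ℝ (fun s => (N α s)ᵀ *ᵥ ((χ t₀ s)ᵀ *ᵥ v)) t (Pi.single β 1)
        = (fderiv ℝ (N α) t (Pi.single β 1))ᵀ *ᵥ ((χ t₀ t)ᵀ *ᵥ v)
          - ((N α t)ᵀ * ((M β t)ᵀ * (χ t₀ t)ᵀ)) *ᵥ v := by
    intro v α t ht β
    obtain ⟨Lw, hLw, happw⟩ := my_hasFDerivAt_matmulVec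
      (my_hasFDerivAt_trans (hφderiv t ht).1) (hasFDerivAt_const v t)
    obtain ⟨Lu, hLu, happu⟩ := my_hasFDerivAt_matmulVec
      (my_hasFDerivAt_trans (hNd α t ht)) hLw
    rw [hLu.fderiv, happu, happw]
    simp only [ContinuousLinearMap.coe_comp', Function.comp_apply, myTransCLM_apply,
      ContinuousLinearMap.zero_apply, Matrix.mulVec_zero, add_zero,
      (hφderiv t ht).2 β]
    rw [Matrix.transpose_neg, Matrix.transpose_mul, Matrix.neg_mulVec, Matrix.mulVec_neg,
      Matrix.mulVec_mulVec, Matrix.mulVec_mulVec, sub_eq_add_neg]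
  -- the key pointwise reformulation
  have key : ∀ t ∈ D, ∀ α β (v : Fin n → ℝ),
      (M α t *ᵥ (N β t *ᵥ ((N β t)ᵀ *ᵥ ((χ t₀ t)ᵀ *ᵥ v)))
        + (fderiv ℝ (N α) t (Pi.single β 1)) *ᵥ ((N α t)ᵀ *ᵥ ((χ t₀ t)ᵀ *ᵥ v))
        + N α t *ᵥ (fderiv ℝ (fun s => (N α s)ᵀ *ᵥ ((χ t₀ s)ᵀ *ᵥ v)) t (Pi.single β 1)) =
       M β t *ᵥ (N α t *ᵥ ((N α t)ᵀ *ᵥ ((χ t₀ t)ᵀ *ᵥ v)))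
        + (fderiv ℝ (N β) t (Pi.single α 1)) *ᵥ ((N β t)ᵀ *ᵥ ((χ t₀ t)ᵀ *ᵥ v))
        + N β t *ᵥ (fderiv ℝ (fun s => (N β s)ᵀ *ᵥ ((χ t₀ s)ᵀ *ᵥ v)) t (Pi.single α 1)))
      ↔
      (M α t * (N β t * (N β t)ᵀ) + fderiv ℝ (N α) t (Pi.single β 1) * (N α t)ᵀ
        + N α t * (fderiv ℝ (N α) t (Pi.single β 1))ᵀ
        + N β t * (N β t)ᵀ * (M α t)ᵀ) *ᵥ ((χ t₀ t)ᵀ *ᵥ v) =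
      (M β t * (N α t * (N α t)ᵀ) + fderiv ℝ (N β) t (Pi.single α 1) * (N β t)ᵀ
        + N β t * (fderiv ℝ (N β) t (Pi.single α 1))ᵀ
        + N α t * (N α t)ᵀ * (M β t)ᵀ) *ᵥ ((χ t₀ t)ᵀ *ᵥ v) := by
    intro t ht α β v
    rw [hufder v α t ht β, hufder v β t ht α]
    have e1 : M α t *ᵥ (N β t *ᵥ ((N β t)ᵀ *ᵥ ((χ t₀ t)ᵀ *ᵥ v)))
        + (fderiv ℝ (N α) t (Pi.single β 1)) *ᵥ ((N α t)ᵀ *ᵥ ((χ t₀ t)ᵀ *ᵥ v))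
        + N α t *ᵥ ((fderiv ℝ (N α) t (Pi.single β 1))ᵀ *ᵥ ((χ t₀ t)ᵀ *ᵥ v)
            - ((N α t)ᵀ * ((M β t)ᵀ * (χ t₀ t)ᵀ)) *ᵥ v)
        = (M α t * (N β t * (N β t)ᵀ) + fderiv ℝ (N α) t (Pi.single β 1) * (N α t)ᵀ
            + N α t * (fderiv ℝ (N α) t (Pi.single β 1))ᵀ
            + N β t * (N β t)ᵀ * (M α t)ᵀ) *ᵥ ((χ t₀ t)ᵀ *ᵥ v)
          - ((N α t * ((N α t)ᵀ * (M β t)ᵀ)) *ᵥ ((χ t₀ t)ᵀ *ᵥ v)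
            + (N β t * ((N β t)ᵀ * (M α t)ᵀ)) *ᵥ ((χ t₀ t)ᵀ *ᵥ v)) := by
      simp only [Matrix.mulVec_sub, Matrix.add_mulVec, Matrix.sub_mulVec, Matrix.add_mul,
        Matrix.sub_mul, Matrix.mulVec_mulVec, Matrix.mul_assoc]
      abel
    have e2 : M β t *ᵥ (N α t *ᵥ ((N α t)ᵀ *ᵥ ((χ t₀ t)ᵀ *ᵥ v)))
        + (fderiv ℝ (N β) t (Pi.single α 1)) *ᵥ ((N β t)ᵀ *ᵥ ((χ t₀ t)ᵀ *ᵥ v))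
        + N β t *ᵥ ((fderiv ℝ (N β) t (Pi.single α 1))ᵀ *ᵥ ((χ t₀ t)ᵀ *ᵥ v)
            - ((N β t)ᵀ * ((M α t)ᵀ * (χ t₀ t)ᵀ)) *ᵥ v)
        = (M β t * (N α t * (N α t)ᵀ) + fderiv ℝ (N β) t (Pi.single α 1) * (N β t)ᵀ
            + N β t * (fderiv ℝ (N β) t (Pi.single α 1))ᵀ
            + N α t * (N α t)ᵀ * (M β t)ᵀ) *ᵥ ((χ t₀ t)ᵀ *ᵥ v)
          - ((N α t * ((N α t)ᵀ * (M β t)ᵀ)) *ᵥ ((χ t₀ t)ᵀ *ᵥ v)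
            + (N β t * ((N β t)ᵀ * (M α t)ᵀ)) *ᵥ ((χ t₀ t)ᵀ *ᵥ v)) := by
      simp only [Matrix.mulVec_sub, Matrix.add_mulVec, Matrix.sub_mulVec, Matrix.add_mul,
        Matrix.sub_mul, Matrix.mulVec_mulVec, Matrix.mul_assoc]
      abel
    rw [e1, e2]
    exact sub_left_inj
  constructor
  · intro h s hs α β
    have hGext : ∀ w : Fin n → ℝ,
        (M α s * (N β s * (N β s)ᵀ) + fderiv ℝ (N α) s (Pi.single β 1) * (N α s)ᵀ
          + N α s * (fderiv ℝ (N α) s (Pi.single β 1))ᵀ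
          + N β s * (N β s)ᵀ * (M α s)ᵀ) *ᵥ w =
        (M β s * (N α s * (N α s)ᵀ) + fderiv ℝ (N β) s (Pi.single α 1) * (N β s)ᵀ
          + N β s * (fderiv ℝ (N β) s (Pi.single α 1))ᵀ
          + N α s * (N α s)ᵀ * (M β s)ᵀ) *ᵥ w := by
      intro w
      have hv := (h ((χ s t₀)ᵀ *ᵥ w)).2 s hs α β
      have hv' := (key s hs α β ((χ s t₀)ᵀ *ᵥ w)).mp hv
      have hq : (χ t₀ s)ᵀ *ᵥ ((χ s t₀)ᵀ *ᵥ w) = w := by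
        rw [Matrix.mulVec_mulVec, ← Matrix.transpose_mul, hRinv s hs,
          Matrix.transpose_one, Matrix.one_mulVec]
      rwa [hq] at hv'
    ext i j
    have := congrFun (hGext (Pi.single j 1)) i
    rwa [Matrix.mulVec_single_one, Matrix.mulVec_single_one] at this
  · intro h v
    refine ⟨fun α => husm v α, fun t ht α β => ?_⟩
    exact (key t ht α β v).mpr (by rw [h t ht α β])
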